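/- Let Y be a harmonic homogeneous polynomial of degree ℓ ≥ 0 on ℝ³, λ, μ ∈ ℝ with μ > 0 and 2μ + λ > 0, τ = (λ+μ)/μ, and α_ℓ = −((ℓ+3)τ + 2)/(2(ℓ(τ+2)+1)). Then the vector field u(x) = (2ℓ+1)·(Y(x)·x + α_ℓ·(|x|² − 1)·∇Y(x)) − ∇Y(x) satisfies the Lamé equation μΔu + (λ+μ)∇(div u) = 0 on ℝ³, and for |x| = 1 it equals (ℓ+1)Y(x)x − ∇_σY(x) (where ∇_σY(x) = ∇Y(x) − ℓY(x)x is the tangential gradient). -/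

import Mathlib

open MvPolynomial
open scoped BigOperators

/-- Partial derivative in direction `i` of a scalar function on `ℝ³`. -/
noncomputable def pd (i : Fin 3) (f : (Fin 3 → ℝ) → ℝ) (x : Fin 3 → ℝ) : ℝ :=
  fderiv ℝ f x (Pi.single i 1)

/-- Laplacian of a scalar function on `ℝ³`. -/
noncomputable def lap3 (f : (Fin 3 → ℝ) → ℝ) (x : Fin 3 → ℝ) : ℝ :=
  ∑ i : Fin 3, pd i (fun y => pd i f y) x

/-- Divergence of a vector field on `ℝ³`. -/
noncomputable def div3 (u : (Fin 3 → ℝ) → (Fin 3 → ℝ)) (x : Fin 3 → ℝ) : ℝ :=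
  ∑ i : Fin 3, pd i (fun y => u y i) x

/-- For a harmonic homogeneous polynomial `Y` of degree `ℓ` and admissible Lamé constants
`λ, μ`, with `τ = (λ+μ)/μ` and `α_ℓ = −((ℓ+3)τ+2)/(2(ℓ(τ+2)+1))`, the field
`u(x) = (2ℓ+1)(Y(x)x + α_ℓ(|x|²−1)∇Y(x)) − ∇Y(x)` solves the Lamé equation
`μΔu + (λ+μ)∇(div u) = 0` on `ℝ³`, and on `|x| = 1` equals
`(ℓ+1)Y(x)x − ∇_σY(x)` where `∇_σY(x) = ∇Y(x) − ℓY(x)x`. -/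
lemma my_pderiv_comm (i j : Fin 3) (P : MvPolynomial (Fin 3) ℝ) :
    pderiv i (pderiv j P) = pderiv j (pderiv i P) := by
  induction P using MvPolynomial.induction_on' with
  | add p q hp hq => simp [hp, hq]
  | monomial v a =>
    rcases eq_or_ne i j with rfl | hij
    · rfl
    · simp only [pderiv_monomial]
      rw [tsub_tsub, tsub_tsub, add_comm (Finsupp.single j 1)]
      congr 1
      rw [Finsupp.tsub_apply, Finsupp.tsub_apply,
        Finsupp.single_apply, Finsupp.single_apply]
      simp [hij, hij.symm]
      ring

lemma my_euler {n : ℕ} {P : MvPolynomial (Fin 3) ℝ} (h : P.IsHomogeneous n) :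
    ∑ j : Fin 3, X j * pderiv j P = C (n : ℝ) * P := by
  have key : ∀ v ∈ P.support,
      ∑ j : Fin 3, X j * pderiv j (monomial v (coeff v P))
        = C (n : ℝ) * monomial v (coeff v P) := by
    intro v hv
    have h1 : ∑ j : Fin 3, v j = n := by
      have h2 := h (MvPolynomial.mem_support_iff.mp hv)
      rw [← h2, show (Finsupp.weight 1 : (Fin 3 →₀ ℕ) →+ ℕ) = Finsupp.weight (fun _ => 1) from rfl,
        ← Finsupp.degree_eq_weight_one, Finsupp.degree_apply]
      exact (Finset.sum_subset (Finset.subset_univ _)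
        (fun j _ hj => Finsupp.notMem_support_iff.mp hj)).symm
    have hdeg : ∑ j : Fin 3, ((v j : ℝ)) = (n : ℝ) := by exact_mod_cast h1
    have hterm : ∀ j : Fin 3, X j * pderiv j (monomial v (coeff v P))
        = monomial v (coeff v P * v j) := by
      intro j
      rw [pderiv_monomial]
      by_cases hvj : v j = 0
      · simp [hvj]
      · have hle : Finsupp.single j 1 ≤ v := by
          rwa [Finsupp.single_le_iff, Nat.one_le_iff_ne_zero]
        rw [X, monomial_mul, one_mul, add_tsub_cancel_of_le hle]
    simp only [hterm]
    rw [C_mul_monomial]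
    rw [← map_sum (monomial v)]
    congr 1
    rw [← Finset.mul_sum]
    push_cast [hdeg]
    ring
  calc ∑ j : Fin 3, X j * pderiv j P
      = ∑ j : Fin 3, ∑ v ∈ P.support, X j * pderiv j (monomial v (coeff v P)) := by
        refine Finset.sum_congr rfl fun j _ => ?_
        conv_lhs => rw [P.as_sum]
        rw [map_sum, Finset.mul_sum]
    _ = ∑ v ∈ P.support, ∑ j : Fin 3, X j * pderiv j (monomial v (coeff v P)) :=
        Finset.sum_comm
    _ = ∑ v ∈ P.support, C (n : ℝ) * monomial v (coeff v P) :=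
        Finset.sum_congr rfl key
    _ = C (n : ℝ) * P := by rw [← Finset.mul_sum, ← P.as_sum]

lemma eval_hasFDerivAt (P : MvPolynomial (Fin 3) ℝ) (x : Fin 3 → ℝ) :
    HasFDerivAt (fun y => eval y P)
      (∑ j : Fin 3, eval x (pderiv j P) •
        (ContinuousLinearMap.proj j : (Fin 3 → ℝ) →L[ℝ] ℝ)) x := by
  induction P using MvPolynomial.induction_on with
  | C a =>
    simp only [eval_C, pderiv_C, map_zero, zero_smul, Finset.sum_const_zero]
    exact hasFDerivAt_const (𝕜 := ℝ) a x
  | add p q hp hq =>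
    have hfun : (fun y => eval y (p + q)) = fun y => eval y p + eval y q := by
      funext y; simp
    rw [hfun]
    refine (hp.add hq).congr_fderiv ?_
    simp [add_smul, Finset.sum_add_distrib]
  | mul_X p j hp =>
    have h2 : HasFDerivAt (fun y : Fin 3 → ℝ => y j)
        ((ContinuousLinearMap.proj j : (Fin 3 → ℝ) →L[ℝ] ℝ)) x := by
      exact hasFDerivAt_apply j x
    have h3 := hp.mul h2
    have hfun : (fun y => eval y (p * X j)) = fun y => eval y p * y j := by
      funext y; simp
    rw [hfun]
    refine h3.congr_fderiv ?_
    ext v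
    simp only [pderiv_mul, ContinuousLinearMap.sum_apply, ContinuousLinearMap.smul_apply,
      ContinuousLinearMap.proj_apply, ContinuousLinearMap.add_apply, eval_add, eval_mul,
      eval_X, pderiv_X, smul_eq_mul, Pi.single_apply, apply_ite (eval x), map_one, map_zero,
      mul_ite, mul_one, mul_zero, ite_mul, zero_mul, add_mul, Finset.sum_add_distrib]
    rw [Finset.sum_ite_eq Finset.univ j]
    simp only [Finset.mem_univ, if_true, Finset.mul_sum]
    rw [add_comm]
    congr 1
    exact Finset.sum_congr rfl fun k _ => by ring

lemma pd_eval (P : MvPolynomial (Fin 3) ℝ) (i : Fin 3) (x : Fin 3 → ℝ) :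
    pd i (fun y => eval y P) x = eval x (pderiv i P) := by
  rw [pd, (eval_hasFDerivAt P x).fderiv]
  simp [Pi.single_apply, ContinuousLinearMap.sum_apply]

noncomputable def lapP (Q : MvPolynomial (Fin 3) ℝ) : MvPolynomial (Fin 3) ℝ :=
  ∑ j : Fin 3, pderiv j (pderiv j Q)

lemma lapP_mul (p q : MvPolynomial (Fin 3) ℝ) :
    lapP (p * q) = lapP p * q + 2 * (∑ j : Fin 3, pderiv j p * pderiv j q) + p * lapP q := by
  unfold lapP
  simp only [pderiv_mul, map_add]
  simp only [Finset.sum_add_distrib, Finset.sum_mul, Finset.mul_sum, ← Finset.sum_add_distrib]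
  refine Finset.sum_congr rfl fun j _ => ?_
  ring

lemma lapP_sub (p q : MvPolynomial (Fin 3) ℝ) : lapP (p - q) = lapP p - lapP q := by
  simp [lapP, Finset.sum_sub_distrib]

lemma lapP_add (p q : MvPolynomial (Fin 3) ℝ) : lapP (p + q) = lapP p + lapP q := by
  simp [lapP, Finset.sum_add_distrib]

lemma lapP_C_mul (c : ℝ) (p : MvPolynomial (Fin 3) ℝ) : lapP (C c * p) = C c * lapP p := by
  simp [lapP, pderiv_C_mul, Finset.mul_sum]

lemma lap3_eval (P : MvPolynomial (Fin 3) ℝ) (x : Fin 3 → ℝ) :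
    lap3 (fun y => eval y P) x = eval x (lapP P) := by
  unfold lap3 lapP
  rw [map_sum]
  refine Finset.sum_congr rfl fun j _ => ?_
  have h1 : (fun y => pd j (fun z => eval z P) y) = fun y => eval y (pderiv j P) :=
    funext (pd_eval P j)
  rw [h1, pd_eval]

theorem stmt18 (ℓ : ℕ) (Y : MvPolynomial (Fin 3) ℝ) (hY : Y.IsHomogeneous ℓ)
    (hYh : ∑ i : Fin 3, pderiv i (pderiv i Y) = 0)
    (lam mu : ℝ) (hmu : 0 < mu) (hlm : 0 < 2 * mu + lam)
    (τ αℓ : ℝ) (hτ : τ = (lam + mu) / mu)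
    (hα : αℓ = -(((ℓ : ℝ) + 3) * τ + 2) / (2 * ((ℓ : ℝ) * (τ + 2) + 1)))
    (u : (Fin 3 → ℝ) → (Fin 3 → ℝ))
    (hu : ∀ (x : Fin 3 → ℝ) (i : Fin 3),
      u x i = (2 * (ℓ : ℝ) + 1) *
          (eval x Y * x i + αℓ * ((∑ j : Fin 3, x j ^ 2) - 1) * eval x (pderiv i Y))
        - eval x (pderiv i Y)) :
    (∀ (x : Fin 3 → ℝ) (i : Fin 3),
        mu * lap3 (fun y => u y i) x + (lam + mu) * pd i (div3 u) x = 0) ∧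
    (∀ x : Fin 3 → ℝ, (∑ j : Fin 3, x j ^ 2) = 1 → ∀ i : Fin 3,
        u x i = ((ℓ : ℝ) + 1) * eval x Y * x i
          - (eval x (pderiv i Y) - (ℓ : ℝ) * eval x Y * x i)) := by
  constructor
  · -- Lamé equation
    set G : Fin 3 → MvPolynomial (Fin 3) ℝ := fun i => pderiv i Y with hG
    set Rp : MvPolynomial (Fin 3) ℝ := ∑ j : Fin 3, X j ^ 2 with hRp
    set U : Fin 3 → MvPolynomial (Fin 3) ℝ :=
      fun i => C (2 * (ℓ : ℝ) + 1) * (Y * X i + C αℓ * (Rp - 1) * G i) - G i with hU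
    have hUeval : ∀ (x : Fin 3 → ℝ) (i : Fin 3), u x i = eval x (U i) := by
      intro x i
      rw [hu]
      simp [hU, hRp, hG]
    have hlapY : lapP Y = 0 := hYh
    have hG0 : ∀ i, lapP (G i) = 0 := by
      intro i
      have h0 := congrArg (pderiv i) hYh
      rw [map_sum, map_zero] at h0
      calc lapP (G i) = ∑ j : Fin 3, pderiv j (pderiv j (pderiv i Y)) := rfl
        _ = ∑ j : Fin 3, pderiv i (pderiv j (pderiv j Y)) := by
            refine Finset.sum_congr rfl fun j _ => ?_
            rw [my_pderiv_comm j i Y, my_pderiv_comm j i (pderiv j Y)]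
        _ = 0 := h0
    have heulerY : ∑ j : Fin 3, X j * G j = C (ℓ : ℝ) * Y := my_euler hY
    have heulerG : ∀ i, ∑ j : Fin 3, X j * pderiv j (G i) = C ((ℓ : ℝ) - 1) * G i := by
      intro i
      have h0 := congrArg (pderiv i) heulerY
      rw [map_sum, pderiv_C_mul] at h0
      simp only [pderiv_mul] at h0
      have h1 : ∀ j : Fin 3, pderiv i (X j) * G j + X j * pderiv i (G j)
          = pderiv i (X j) * G j + X j * pderiv j (G i) := by
        intro j
        rw [hG]
        simp only
        rw [my_pderiv_comm i j Y]
      rw [Finset.sum_congr rfl (fun j _ => h1 j), Finset.sum_add_distrib] at h0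
      have h2 : ∑ j : Fin 3, pderiv i (X j) * G j = G i := by
        simp [pderiv_X, Pi.single_apply, ite_mul]
      rw [h2] at h0
      have h3 : (C ((ℓ:ℝ) - 1) : MvPolynomial (Fin 3) ℝ) = C (ℓ:ℝ) - 1 := by
        rw [map_sub, map_one]
      rw [h3]
      linear_combination h0
    have hpdR : ∀ j, pderiv j (Rp - 1) = (2 : MvPolynomial (Fin 3) ℝ) * X j := by
      intro j
      rw [map_sub, pderiv_one, sub_zero, hRp, map_sum]
      have h1 : ∀ k : Fin 3, pderiv j (X k ^ 2)
          = if k = j then (2 : MvPolynomial (Fin 3) ℝ) * X j else 0 := by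
        intro k
        rcases eq_or_ne k j with rfl | hk
        · simp [pderiv_pow, pderiv_X_self]
        · simp [pderiv_pow, pderiv_X_of_ne hk, hk]
      rw [Finset.sum_congr rfl (fun k _ => h1 k), Finset.sum_ite_eq' Finset.univ j,
        if_pos (Finset.mem_univ j)]
    have hlapR : lapP (Rp - 1) = 6 := by
      unfold lapP
      rw [Finset.sum_congr rfl (fun j (_ : j ∈ Finset.univ) => by rw [hpdR j])]
      have h1 : ∀ j : Fin 3, pderiv j ((2 : MvPolynomial (Fin 3) ℝ) * X j)
          = (2 : MvPolynomial (Fin 3) ℝ) := by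
        intro j
        rw [show (2 : MvPolynomial (Fin 3) ℝ) = C 2 from (map_ofNat C 2).symm, pderiv_C_mul,
          pderiv_X_self, mul_one]
      rw [Finset.sum_congr rfl (fun j _ => h1 j)]
      rw [Finset.sum_const]
      norm_num
    have hXY : ∀ i, lapP (Y * X i) = 2 * G i := by
      intro i
      rw [lapP_mul, hlapY]
      have h1 : ∑ j : Fin 3, pderiv j Y * pderiv j (X i) = G i := by
        have h2 : ∀ j : Fin 3, pderiv j Y * pderiv j (X i)
            = if i = j then G j else 0 := by
          intro j
          rcases eq_or_ne i j with rfl | hij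
          · rw [pderiv_X_self, mul_one, hG, if_pos rfl]
          · rw [pderiv_X_of_ne hij, mul_zero, if_neg hij]
        rw [Finset.sum_congr rfl (fun j _ => h2 j), Finset.sum_ite_eq Finset.univ i]
        simp
      have h2 : lapP (X i) = 0 := by
        unfold lapP
        have h3 : ∀ j : Fin 3, pderiv j (pderiv j (X i : MvPolynomial (Fin 3) ℝ)) = 0 := by
          intro j
          rcases eq_or_ne j i with rfl | hj
          · rw [pderiv_X_self, pderiv_one]
          · rw [pderiv_X_of_ne (Ne.symm hj), map_zero]
        exact Finset.sum_eq_zero fun j _ => h3 j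
      rw [h1, h2]
      ring
    have hRG : ∀ i, lapP ((Rp - 1) * G i) = C (4 * (ℓ : ℝ) + 2) * G i := by
      intro i
      rw [lapP_mul, hlapR, hG0 i]
      have h1 : ∑ j : Fin 3, pderiv j (Rp - 1) * pderiv j (G i)
          = 2 * (C ((ℓ : ℝ) - 1) * G i) := by
        calc ∑ j : Fin 3, pderiv j (Rp - 1) * pderiv j (G i)
            = ∑ j : Fin 3, 2 * (X j * pderiv j (G i)) := by
              refine Finset.sum_congr rfl fun j _ => ?_
              rw [hpdR j]; ring
          _ = 2 * (C ((ℓ : ℝ) - 1) * G i) := by rw [← Finset.mul_sum, heulerG i]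
      rw [h1]
      simp only [map_mul, map_add, map_sub, map_one, map_ofNat]
      ring
    have hA : ∀ i, lapP (U i)
        = C ((2 * (ℓ:ℝ) + 1) * (2 + αℓ * (4 * (ℓ:ℝ) + 2))) * G i := by
      intro i
      rw [hU]
      simp only
      rw [lapP_sub, mul_assoc (C αℓ), lapP_C_mul, lapP_add, lapP_C_mul, hXY i, hRG i, hG0 i,
        sub_zero]
      simp only [map_mul, map_add, map_ofNat]
      ring
    -- divergence polynomial
    have hD : (∑ j : Fin 3, pderiv j (U j))
        = C ((2 * (ℓ:ℝ) + 1) * ((ℓ:ℝ) + 3 + 2 * (ℓ:ℝ) * αℓ)) * Y := by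
      have hterm : ∀ j : Fin 3, pderiv j (U j)
          = C (2 * (ℓ:ℝ) + 1) * ((pderiv j Y * X j + Y * pderiv j (X j))
              + C αℓ * (((2 : MvPolynomial (Fin 3) ℝ) * X j) * G j
                + (Rp - 1) * pderiv j (G j)))
            - pderiv j (G j) := by
        intro j
        rw [hU]
        simp only
        rw [map_sub, pderiv_C_mul, map_add (pderiv j) (Y * X j), pderiv_mul,
          mul_assoc (C αℓ), pderiv_C_mul, pderiv_mul, hpdR j]
      have s1 : ∑ j : Fin 3, pderiv j Y * X j = C (ℓ:ℝ) * Y := by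
        rw [← heulerY]
        refine Finset.sum_congr rfl fun j _ => ?_
        rw [hG]
        simp only
        ring
      have s2 : ∑ j : Fin 3, pderiv j (X j) = (3 : MvPolynomial (Fin 3) ℝ) := by
        rw [Finset.sum_congr rfl (fun j (_ : j ∈ Finset.univ) => pderiv_X_self j)]
        rw [Finset.sum_const]
        simp only [Finset.card_univ, Fintype.card_fin, nsmul_eq_mul]
        norm_num
      have s3 : ∑ j : Fin 3, (2 : MvPolynomial (Fin 3) ℝ) * X j * G j
          = 2 * (C (ℓ:ℝ) * Y) := by
        calc ∑ j : Fin 3, (2 : MvPolynomial (Fin 3) ℝ) * X j * G j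
            = ∑ j : Fin 3, 2 * (X j * G j) := by
              refine Finset.sum_congr rfl fun j _ => ?_
              ring
          _ = 2 * (C (ℓ:ℝ) * Y) := by rw [← Finset.mul_sum, heulerY]
      have s5 : ∑ j : Fin 3, pderiv j (G j) = 0 := by
        rw [hG]
        simp only
        exact hYh
      calc ∑ j : Fin 3, pderiv j (U j)
          = ∑ j : Fin 3, (C (2*(ℓ:ℝ)+1) * (pderiv j Y * X j)
              + C (2*(ℓ:ℝ)+1) * (Y * pderiv j (X j))
              + C (2*(ℓ:ℝ)+1) * C αℓ * ((2 : MvPolynomial (Fin 3) ℝ) * X j * G j)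
              + C (2*(ℓ:ℝ)+1) * C αℓ * (Rp - 1) * pderiv j (G j)
              - pderiv j (G j)) := by
            refine Finset.sum_congr rfl fun j _ => ?_
            rw [hterm j]
            ring
        _ = C (2*(ℓ:ℝ)+1) * (∑ j : Fin 3, pderiv j Y * X j)
            + C (2*(ℓ:ℝ)+1) * (Y * (∑ j : Fin 3, pderiv j (X j)))
            + C (2*(ℓ:ℝ)+1) * C αℓ * (∑ j : Fin 3,
                (2 : MvPolynomial (Fin 3) ℝ) * X j * G j)
            + C (2*(ℓ:ℝ)+1) * C αℓ * (Rp - 1) * (∑ j : Fin 3, pderiv j (G j))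
            - ∑ j : Fin 3, pderiv j (G j) := by
            simp only [Finset.sum_add_distrib, Finset.sum_sub_distrib, ← Finset.mul_sum]
        _ = C ((2 * (ℓ:ℝ) + 1) * ((ℓ:ℝ) + 3 + 2 * (ℓ:ℝ) * αℓ)) * Y := by
            rw [s1, s2, s3, s5, mul_zero, sub_zero]
            simp only [map_mul, map_add, map_ofNat]
            ring
    -- put it together
    intro x i
    have hui : (fun y => u y i) = fun y => eval y (U i) := funext fun y => hUeval y i
    have hdiv : div3 u = fun y => eval y (∑ j : Fin 3, pderiv j (U j)) := by
      funext y
      unfold div3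
      rw [map_sum]
      refine Finset.sum_congr rfl fun j _ => ?_
      have h1 : (fun z => u z j) = fun z => eval z (U j) := funext fun z => hUeval z j
      rw [h1, pd_eval]
    rw [hui, lap3_eval, hdiv, pd_eval, hA i, hD, pderiv_C_mul]
    rw [eval_mul, eval_mul, eval_C, eval_C]
    have hc : mu * ((2 * (ℓ:ℝ) + 1) * (2 + αℓ * (4 * (ℓ:ℝ) + 2)))
        + (lam + mu) * ((2 * (ℓ:ℝ) + 1) * ((ℓ:ℝ) + 3 + 2 * (ℓ:ℝ) * αℓ)) = 0 := by
      have hm : mu ≠ 0 := ne_of_gt hmu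
      have hlm3 : 0 < lam + 3 * mu := by linarith
      have hd : (ℓ:ℝ) * (τ + 2) + 1 ≠ 0 := by
        have h0 : τ + 2 = (lam + 3 * mu) / mu := by rw [hτ]; field_simp; ring
        rw [h0]
        have h1 : 0 ≤ (ℓ:ℝ) * ((lam + 3 * mu) / mu) :=
          mul_nonneg (Nat.cast_nonneg ℓ) (le_of_lt (div_pos hlm3 hmu))
        positivity
      have hlm' : lam + mu = τ * mu := by rw [hτ]; field_simp
      have hαd : αℓ * (2 * ((ℓ:ℝ) * (τ + 2) + 1)) = -(((ℓ:ℝ) + 3) * τ + 2) := by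
        rw [hα]
        field_simp
      linear_combination (mu * (2 * (ℓ:ℝ) + 1)) * hαd
        + ((2 * (ℓ:ℝ) + 1) * ((ℓ:ℝ) + 3 + 2 * (ℓ:ℝ) * αℓ)) * hlm'
    linear_combination (eval x (G i)) * hc
  · intro x hx i
    rw [hu x i, hx]
    ring
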